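/- In the additive Schwarz setting, suppose for each subdomain j the local generalized eigenproblem (I−ξ_{0j}ᵀ)D_jR_jAR_jᵀD_j(I−ξ_{0j})V = λ A_j^Neu V has A_j^Neu-orthonormal eigenpairs (V_{jk}, λ_{jk}), and let π_j be the projection onto span{V_{jk} : λ_{jk} > τ} parallel to span{V_{jk} : λ_{jk} ≤ τ}. Then for all U_j ∈ ℝ^{n_j}: (R_jAR_jᵀ D_j(I−ξ_{0j})(I−π_j)U_j, D_j(I−ξ_{0j})(I−π_j)U_j) ≤ τ (A_j^Neu U_j, U_j). -/

import Mathlib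

open Matrix Finset
open scoped Classical

private lemma sum_dot' {ι m : Type*} [Fintype m] (s : Finset ι) (f : ι → (m → ℝ)) (w : m → ℝ) :
    (∑ i ∈ s, f i) ⬝ᵥ w = ∑ i ∈ s, (f i ⬝ᵥ w) := by
  simp only [dotProduct, Finset.sum_apply, Finset.sum_mul]
  exact Finset.sum_comm

private lemma dot_sum' {ι m : Type*} [Fintype m] (s : Finset ι) (f : ι → (m → ℝ)) (w : m → ℝ) :
    w ⬝ᵥ (∑ i ∈ s, f i) = ∑ i ∈ s, (w ⬝ᵥ f i) := by
  simp only [dotProduct, Finset.sum_apply, Finset.mul_sum]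
  exact Finset.sum_comm

private lemma mulVec_sum' {ι m p : Type*} [Fintype m] (s : Finset ι)
    (M : Matrix p m ℝ) (f : ι → (m → ℝ)) :
    M *ᵥ (∑ i ∈ s, f i) = ∑ i ∈ s, M *ᵥ f i := by
  simp only [← Matrix.mulVecLin_apply]
  exact map_sum _ _ _

private lemma quad_conj' {m p : Type*} [Fintype m] [Fintype p]
    (C : Matrix m p ℝ) (P : Matrix m m ℝ) (x : p → ℝ) :
    ((Cᵀ * P * C) *ᵥ x) ⬝ᵥ x = (P *ᵥ (C *ᵥ x)) ⬝ᵥ (C *ᵥ x) := by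
  rw [Matrix.mul_assoc Cᵀ P C, ← Matrix.mulVec_mulVec,
    Matrix.mulVec_transpose, ← Matrix.dotProduct_mulVec, ← Matrix.mulVec_mulVec]

theorem stmt18 {n nj : ℕ}
    (A : Matrix (Fin n) (Fin n) ℝ) (hA : A.PosDef)
    (R : Matrix (Fin nj) (Fin n) ℝ)
    (D : Matrix (Fin nj) (Fin nj) ℝ) (hD : D.IsDiag)
    (xi : Matrix (Fin nj) (Fin nj) ℝ) (hxi : xi * xi = xi)
    (ANeu : Matrix (Fin nj) (Fin nj) ℝ) (hANeu : ANeu.PosDef)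
    (v : Fin nj → (Fin nj → ℝ)) (lam : Fin nj → ℝ)
    (heig : ∀ k,
      ((1 - xiᵀ) * D * (R * A * Rᵀ) * D * (1 - xi)) *ᵥ v k = lam k • (ANeu *ᵥ v k))
    (horth : ∀ k l, (ANeu *ᵥ v k) ⬝ᵥ v l = if k = l then 1 else 0)
    (τ : ℝ) (hτ : 0 < τ)
    (π : (Fin nj → ℝ) → (Fin nj → ℝ))
    (hπ : ∀ u, π u = ∑ k ∈ Finset.univ.filter (fun k => τ < lam k),
      ((ANeu *ᵥ v k) ⬝ᵥ u) • v k) :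
    ∀ U : Fin nj → ℝ,
      ((R * A * Rᵀ) *ᵥ (D *ᵥ ((1 - xi) *ᵥ (U - π U)))) ⬝ᵥ
          (D *ᵥ ((1 - xi) *ᵥ (U - π U))) ≤
        τ * ((ANeu *ᵥ U) ⬝ᵥ U) := by
  intro U
  set M : Matrix (Fin nj) (Fin nj) ℝ :=
    (1 - xiᵀ) * D * (R * A * Rᵀ) * D * (1 - xi) with hMdef
  set c : Fin nj → ℝ := fun k => (ANeu *ᵥ v k) ⬝ᵥ U with hcdef
  set S : Finset (Fin nj) := Finset.univ.filter (fun k => ¬ τ < lam k) with hSdef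
  set w : Fin nj → ℝ := U - π U with hwdef
  -- D is symmetric
  have hDt : Dᵀ = D := by
    ext i j
    by_cases h : i = j
    · subst h; rfl
    · rw [Matrix.transpose_apply, hD h, hD (Ne.symm h)]
  -- M as a congruence
  have hMconj : M = (D * (1 - xi))ᵀ * (R * A * Rᵀ) * (D * (1 - xi)) := by
    rw [Matrix.transpose_mul, Matrix.transpose_sub, Matrix.transpose_one, hDt, hMdef]
    simp only [Matrix.mul_assoc]
  -- the LHS quadratic form
  have hLHS : ((R * A * Rᵀ) *ᵥ (D *ᵥ ((1 - xi) *ᵥ w))) ⬝ᵥ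
      (D *ᵥ ((1 - xi) *ᵥ w)) = (M *ᵥ w) ⬝ᵥ w := by
    rw [hMconj, quad_conj']
    simp only [Matrix.mulVec_mulVec, Matrix.mul_assoc]
  -- nonnegativity of the quadratic form of M
  have hMpos : ∀ x : Fin nj → ℝ, 0 ≤ (M *ᵥ x) ⬝ᵥ x := by
    intro x
    rw [hMconj, quad_conj',
      show R * A * Rᵀ = (Rᵀ)ᵀ * A * Rᵀ by rw [Matrix.transpose_transpose], quad_conj']
    have := hA.posSemidef.dotProduct_mulVec_nonneg (Rᵀ *ᵥ ((D * (1 - xi)) *ᵥ x))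
    rw [dotProduct_comm]
    simpa using this
  -- eigenvalues are nonnegative
  have hlam : ∀ k, 0 ≤ lam k := by
    intro k
    have h1 := hMpos (v k)
    rw [heig k] at h1
    rw [smul_dotProduct, horth k k] at h1
    simpa using h1
  -- completeness : U = ∑ k, c k • v k
  have hcomp : ∀ j, (∑ k, c k • v k) j = U j := by
    -- use matrix identity
    set E : Matrix (Fin nj) (Fin nj) ℝ := Matrix.of (fun k i => v k i) with hEdef
    have h1 : E * (ANeu * Eᵀ) = 1 := by
      ext k l
      have h2 := horth l k
      simp only [Matrix.mul_apply, Matrix.one_apply, hEdef, Matrix.of_apply,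
        Matrix.transpose_apply, Matrix.mulVec, dotProduct] at h2 ⊢
      rw [show (if k = l then (1:ℝ) else 0) = (if l = k then (1:ℝ) else 0) by
        by_cases h : k = l <;> simp [h, Ne.symm, eq_comm], ← h2]
      exact Finset.sum_congr rfl fun i _ => mul_comm _ _
    have h2 : (ANeu * Eᵀ) * E = 1 := mul_eq_one_comm.mp h1
    intro j
    have h3 := congrFun (congrFun h2 j) j
    -- expand
    have h4 : ∀ i j', ((ANeu * Eᵀ) * E) i j' = ∑ k, (ANeu *ᵥ v k) i * v k j' := by
      intro i j'
      simp only [Matrix.mul_apply, hEdef, Matrix.of_apply, Matrix.transpose_apply,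
        Matrix.mulVec, dotProduct]
    calc (∑ k, c k • v k) j = ∑ k, (∑ i, (ANeu *ᵥ v k) i * U i) * v k j := by
          simp [hcdef, dotProduct, Finset.sum_apply]
      _ = ∑ i, ∑ k, (ANeu *ᵥ v k) i * U i * v k j := by
          simp only [Finset.sum_mul]
          exact Finset.sum_comm
      _ = ∑ i, U i * (∑ k, (ANeu *ᵥ v k) i * v k j) := by
          apply Finset.sum_congr rfl
          intro i _
          rw [Finset.mul_sum]
          exact Finset.sum_congr rfl fun k _ => by ring
      _ = ∑ i, U i * ((1 : Matrix (Fin nj) (Fin nj) ℝ) i j) := by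
          apply Finset.sum_congr rfl
          intro i _
          rw [← h4, h2]
      _ = U j := by simp [Matrix.one_apply]
  have hU : U = ∑ k, c k • v k := by
    funext j
    exact (hcomp j).symm
  -- w as a sum over S
  have hw : w = ∑ k ∈ S, c k • v k := by
    have hsplit := Finset.sum_filter_add_sum_filter_not Finset.univ
      (fun k => τ < lam k) (fun k => c k • v k)
    rw [hwdef, hπ U]
    rw [show (∑ k ∈ Finset.univ.filter (fun k => τ < lam k),
        ((ANeu *ᵥ v k) ⬝ᵥ U) • v k) = ∑ k ∈ Finset.univ.filter (fun k => τ < lam k),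
        c k • v k from rfl]
    rw [hU, ← hsplit]
    abel
  -- c of an orthonormal expansion
  have hdot : ∀ (s : Finset (Fin nj)) (a : Fin nj → ℝ),
      (∑ k ∈ s, a k • (ANeu *ᵥ v k)) ⬝ᵥ (∑ l ∈ s, c l • v l) = ∑ k ∈ s, a k * c k := by
    intro s a
    rw [sum_dot']
    apply Finset.sum_congr rfl
    intro k hk
    rw [dot_sum']
    simp only [smul_dotProduct, dotProduct_smul, horth, smul_eq_mul,
      mul_ite, mul_one, mul_zero]
    rw [Finset.sum_ite_eq s k (fun i => c i * a k)]
    simp [hk, mul_comm]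
  -- the quadratic form on w
  have hMw : (M *ᵥ w) ⬝ᵥ w = ∑ k ∈ S, lam k * (c k * c k) := by
    rw [hw, mulVec_sum']
    have : ∀ k, M *ᵥ (c k • v k) = (c k * lam k) • (ANeu *ᵥ v k) := by
      intro k
      rw [Matrix.mulVec_smul, heig k, smul_smul]
    simp only [this]
    rw [hdot S (fun k => c k * lam k)]
    apply Finset.sum_congr rfl
    intro k _
    ring
  -- the RHS quadratic form
  have hRHS : (ANeu *ᵥ U) ⬝ᵥ U = ∑ k, c k * c k := by
    conv_lhs => rw [hU]
    rw [mulVec_sum']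
    simp only [Matrix.mulVec_smul]
    exact hdot Finset.univ c
  -- put it together
  rw [hLHS, hMw, hRHS]
  calc ∑ k ∈ S, lam k * (c k * c k) ≤ ∑ k ∈ S, τ * (c k * c k) := by
        apply Finset.sum_le_sum
        intro k hk
        have hk' : ¬ τ < lam k := (Finset.mem_filter.mp hk).2
        exact mul_le_mul_of_nonneg_right (le_of_not_gt hk') (mul_self_nonneg _)
    _ = τ * ∑ k ∈ S, c k * c k := by rw [Finset.mul_sum]
    _ ≤ τ * ∑ k, c k * c k := by
        apply mul_le_mul_of_nonneg_left _ (le_of_lt hτ)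
        apply Finset.sum_le_sum_of_subset_of_nonneg (Finset.filter_subset _ _)
        intro k _ _
        exact mul_self_nonneg _
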